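/- Let D = ℚ ∩ ⋃ n : ℕ, (n - 1/(n + π), n + 1/(n + π)) viewed as a subset of the topological space ℚ. Then D is both open and closed in ℚ. Moreover, with S : ℚ → ℚ given by S(x) = x + 1: (a) S^[n] 0 ∈ D for all n ∈ ℕ; (b) for every rational x with 0 < x < 1/2 and every natural number n > 1/x, S^[n] x ∉ D. -/

import Mathlib

def D17 : Set ℚ :=
  {q : ℚ | ∃ n : ℕ, (n : ℝ) - 1 / (n + Real.pi) < (q : ℝ) ∧
    (q : ℝ) < (n : ℝ) + 1 / (n + Real.pi)}

theorem clopen_set_cd_counterexample :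
    IsOpen D17 ∧ IsClosed D17 ∧
    (∀ n : ℕ, (fun x : ℚ => x + 1)^[n] 0 ∈ D17) ∧
    (∀ x : ℚ, 0 < x → x < 1 / 2 → ∀ n : ℕ, (1 / x : ℚ) < (n : ℚ) →
      (fun x : ℚ => x + 1)^[n] x ∉ D17) := by
  have hpi : (3 : ℝ) < Real.pi := Real.pi_gt_three
  have hpos : ∀ n : ℕ, (0 : ℝ) < (n : ℝ) + Real.pi := by
    intro n
    have : (0:ℝ) ≤ (n:ℝ) := Nat.cast_nonneg n
    linarith
  have hrpos : ∀ n : ℕ, (0 : ℝ) < 1 / ((n : ℝ) + Real.pi) := fun n =>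
    div_pos one_pos (hpos n)
  have hrlt : ∀ n : ℕ, 1 / ((n : ℝ) + Real.pi) < 1 / 3 := by
    intro n
    have h3 : (3:ℝ) < (n:ℝ) + Real.pi := by
      have : (0:ℝ) ≤ (n:ℝ) := Nat.cast_nonneg n
      linarith
    exact one_div_lt_one_div_of_lt (by norm_num) h3
  have hirr1 : ∀ n : ℕ, Irrational ((n : ℝ) - 1 / (n + Real.pi)) := by
    intro n
    rw [one_div]
    exact Irrational.natCast_sub (irrational_pi.natCast_add n).inv n
  have hirr2 : ∀ n : ℕ, Irrational ((n : ℝ) + 1 / (n + Real.pi)) := by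
    intro n
    rw [one_div]
    exact Irrational.natCast_add (irrational_pi.natCast_add n).inv n
  have hopen : IsOpen D17 := by
    have hD : D17 = ⋃ n : ℕ, ((↑) : ℚ → ℝ) ⁻¹'
        (Set.Ioo ((n : ℝ) - 1 / (n + Real.pi)) ((n : ℝ) + 1 / (n + Real.pi))) := by
      ext q
      simp [D17, Set.mem_iUnion, Set.mem_Ioo]
    rw [hD]
    exact isOpen_iUnion fun n => isOpen_Ioo.preimage Rat.continuous_coe_real
  have hclosed : IsClosed D17 := by
    have hF : IsClosed (⋃ n : ℕ,
        Set.Icc ((n : ℝ) - 1 / (n + Real.pi)) ((n : ℝ) + 1 / (n + Real.pi))) := by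
      apply LocallyFinite.isClosed_iUnion
      · intro x
        refine ⟨Metric.ball x 1, Metric.ball_mem_nhds x one_pos, ?_⟩
        apply Set.Finite.subset (Set.finite_Iio (⌈x⌉₊ + 3))
        rintro n ⟨y, hy1, hy2⟩
        simp only [Set.mem_Icc] at hy1
        have hb : dist y x < 1 := Metric.mem_ball.mp hy2
        have hyx : y < x + 1 := by
          have := abs_lt.mp (by simpa [Real.dist_eq] using hb)
          linarith [this.2]
        have hx : x ≤ (⌈x⌉₊ : ℝ) := Nat.le_ceil x
        have hn : (n : ℝ) < (⌈x⌉₊ : ℝ) + 3 := by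
          have := hrlt n
          linarith [hy1.1]
        have : (n : ℝ) < ((⌈x⌉₊ + 3 : ℕ) : ℝ) := by push_cast; linarith
        exact_mod_cast this
      · intro n; exact isClosed_Icc
    have hD : D17 = ((↑) : ℚ → ℝ) ⁻¹' (⋃ n : ℕ,
        Set.Icc ((n : ℝ) - 1 / (n + Real.pi)) ((n : ℝ) + 1 / (n + Real.pi))) := by
      ext q
      simp only [D17, Set.mem_setOf_eq, Set.mem_preimage, Set.mem_iUnion, Set.mem_Icc]
      constructor
      · rintro ⟨n, h1, h2⟩
        exact ⟨n, le_of_lt h1, le_of_lt h2⟩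
      · rintro ⟨n, h1, h2⟩
        refine ⟨n, lt_of_le_of_ne h1 ?_, lt_of_le_of_ne h2 ?_⟩
        · intro h
          exact hirr1 n ⟨q, h.symm⟩
        · intro h
          exact hirr2 n ⟨q, h⟩
    rw [hD]
    exact hF.preimage Rat.continuous_coe_real
  have hiter : ∀ (n : ℕ) (x : ℚ), (fun y : ℚ => y + 1)^[n] x = x + n := by
    intro n
    induction n with
    | zero => intro x; simp
    | succ k ih =>
      intro x
      rw [Function.iterate_succ_apply', ih]
      push_cast
      ring
  refine ⟨hopen, hclosed, ?_, ?_⟩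
  · intro n
    rw [hiter]
    refine ⟨n, ?_, ?_⟩ <;>
    · push_cast
      linarith [hrpos n]
  · intro x hx hx2 n hn
    rw [hiter]
    rintro ⟨m, h1, h2⟩
    push_cast at h1 h2
    have hxR : (0 : ℝ) < (x : ℝ) := by exact_mod_cast hx
    have hx2R : (x : ℝ) < 1 / 2 := by
      have := (Rat.cast_lt (K := ℝ)).mpr hx2
      simpa using this
    have h1xn : (1 : ℚ) < x * n := by
      have := (div_lt_iff₀ hx).mp hn
      linarith
    have h1xnR : (1 : ℝ) < (x : ℝ) * n := by exact_mod_cast h1xn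
    have hrm := hrlt m
    have hrm0 := hrpos m
    -- m = n
    have hmn : m = n := by
      have hlt : (m : ℝ) < (n : ℝ) + 1 := by linarith
      have hgt : (n : ℝ) < (m : ℝ) + 1 := by linarith
      have h1 : m < n + 1 := by exact_mod_cast hlt
      have h2 : n < m + 1 := by exact_mod_cast hgt
      omega
    rw [hmn] at h2
    have hxlt : (x : ℝ) < 1 / ((n : ℝ) + Real.pi) := by linarith
    have hmul := (lt_div_iff₀ (hpos n)).mp hxlt
    nlinarith [Real.pi_pos]
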